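/- arXiv:2211.05726 — 3 statements merged into one kernel-verified Lean document; each statement's English description precedes it below -/
import Mathlib

section
/- For any connected cubic graph G, the maximum number of leaves in a spanning tree equals the maximum number of full degree vertices in a spanning tree plus 2; that is, λ(G) = φ(G) + 2. -/
open SimpleGraph

/-- Degree of `v` in `T` (as `Set.ncard` of the neighbor set). -/
noncomputable def deg {V : Type*} (T : SimpleGraph V) (v : V) : ℕ :=
  (T.neighborSet v).ncard

/-- `T` is a spanning tree of `G`. -/
def IsSpanningTree {V : Type*} (G T : SimpleGraph V) : Prop :=
  T ≤ G ∧ T.IsTree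

/-- Number of full degree vertices of the spanning tree `T` of `G`. -/
noncomputable def fullDegCount {V : Type*} (G T : SimpleGraph V) : ℕ :=
  {v : V | deg T v = deg G v}.ncard

/-- Number of leaves of `T`. -/
noncomputable def leafCount {V : Type*} (T : SimpleGraph V) : ℕ :=
  {v : V | deg T v = 1}.ncard

/-- `φ(G)`: maximum number of full degree vertices over all spanning trees. -/
noncomputable def phi {V : Type*} (G : SimpleGraph V) : ℕ :=
  sSup {k | ∃ T : SimpleGraph V, IsSpanningTree G T ∧ fullDegCount G T = k}

/-- `λ(G)`: maximum number of leaves over all spanning trees. -/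
noncomputable def lam {V : Type*} (G : SimpleGraph V) : ℕ :=
  sSup {k | ∃ T : SimpleGraph V, IsSpanningTree G T ∧ leafCount T = k}

/-- `S` is a connected dominating set of `G`. -/
def IsConnDomSet {V : Type*} (G : SimpleGraph V) (S : Set V) : Prop :=
  (G.induce S).Connected ∧ ∀ v : V, v ∈ S ∨ ∃ u ∈ S, G.Adj u v

/-- `γ_C(G)`: minimum size of a connected dominating set. -/
noncomputable def gammaC {V : Type*} (G : SimpleGraph V) : ℕ :=
  sInf {k | ∃ S : Set V, IsConnDomSet G S ∧ S.ncard = k}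

/-- Closed neighborhood of `v` in `G`. -/
def closedNbhd {V : Type*} (G : SimpleGraph V) (v : V) : Set V :=
  insert v (G.neighborSet v)

/-- The square of a graph: join vertices at distance at most 2. -/
def square {V : Type*} (G : SimpleGraph V) : SimpleGraph V where
  Adj u v := u ≠ v ∧ G.Reachable u v ∧ G.dist u v ≤ 2
  symm := by
    constructor
    rintro u v ⟨h1, h2, h3⟩
    exact ⟨h1.symm, h2.symm, by rwa [SimpleGraph.dist_comm]⟩
  loopless := by constructor; rintro v ⟨h, -⟩; exact h rfl

-- spanning tree existence
open Finset

lemma exists_spanning_tree' {V : Type*} [Fintype V] (G : SimpleGraph V) (hG : G.Connected) :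
    ∃ T : SimpleGraph V, T ≤ G ∧ T.IsTree := by
  classical
  generalize hn : G.edgeSet.ncard = n
  induction n using Nat.strong_induction_on generalizing G with
  | _ n ih =>
    by_cases hac : G.IsAcyclic
    · exact ⟨G, le_refl G, ⟨hG, hac⟩⟩
    · rw [isAcyclic_iff_forall_adj_isBridge] at hac
      push_neg at hac
      obtain ⟨v, w, hadj, hbr⟩ := hac
      rw [isBridge_iff] at hbr
      push_neg at hbr
      have hreach : (G \ fromEdgeSet {s(v, w)}).Reachable v w := hbr
      set G' : SimpleGraph V := G \ fromEdgeSet {s(v, w)} with hG'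
      have hle : G' ≤ G := sdiff_le
      have hstep : ∀ a b : V, G.Adj a b → G'.Reachable a b := by
        intro a b hab
        by_cases he : s(a, b) = s(v, w)
        · rw [Sym2.eq_iff] at he
          rcases he with ⟨rfl, rfl⟩ | ⟨rfl, rfl⟩
          · exact hreach
          · exact hreach.symm
        · exact SimpleGraph.Adj.reachable (by
            simp only [hG', sdiff_adj, fromEdgeSet_adj]
            exact ⟨hab, fun h => he h.1⟩)
      have hconn : G'.Connected := by
        rw [connected_iff]
        refine ⟨fun a b => ?_, hG.nonempty⟩
        obtain ⟨p⟩ := hG.preconnected a b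
        induction p with
        | nil => exact Reachable.refl _
        | cons h p ihp => exact (hstep _ _ h).trans ihp
      have hcard : G'.edgeSet.ncard < n := by
        rw [← hn]
        apply Set.ncard_lt_ncard _ G.edgeSet.toFinite
        constructor
        · exact edgeSet_mono hle
        · intro hsub
          have h2 := hsub ((mem_edgeSet (G := G)).mpr hadj)
          rw [hG'] at h2
          simp only [edgeSet_sdiff, edgeSet_fromEdgeSet, Set.mem_diff] at h2
          have := h2.2
          simp [hadj.ne] at this
      obtain ⟨T, hT1, hT2⟩ := ih _ hcard G' hconn rfl
      exact ⟨T, hT1.trans hle, hT2⟩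

lemma deg_eq_degree {V : Type*} [Fintype V] (T : SimpleGraph V) [DecidableRel T.Adj] (v : V) :
    (T.neighborSet v).ncard = T.degree v := by
  rw [degree, neighborFinset_def, Set.ncard_eq_toFinset_card']

lemma leaf_eq_full_add_two {V : Type*} [Fintype V] (G T : SimpleGraph V)
    (hreg : ∀ v : V, (G.neighborSet v).ncard = 3)
    (hle : T ≤ G) (hT : T.IsTree) :
    {v : V | (T.neighborSet v).ncard = 1}.ncard
      = {v : V | (T.neighborSet v).ncard = (G.neighborSet v).ncard}.ncard + 2 := by
  classical
  set d : V → ℕ := fun v => T.degree v with hd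
  -- G degree is 3
  have hGdeg : ∀ v, G.degree v = 3 := fun v => by rw [← deg_eq_degree]; exact hreg v
  -- T degree ≤ 3
  have hdle : ∀ v, d v ≤ 3 := by
    intro v
    have : T.neighborFinset v ⊆ G.neighborFinset v := by
      intro w hw
      rw [mem_neighborFinset] at hw ⊢
      exact hle hw
    have := Finset.card_le_card this
    simpa [hGdeg v] using this
  -- V nontrivial
  have hnontriv : Nontrivial V := by
    have hv : Nonempty V := hT.isConnected.nonempty
    obtain ⟨v⟩ := hv
    have : 0 < G.degree v := by rw [hGdeg]; omega
    rw [degree_pos_iff_exists_adj] at this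
    obtain ⟨w, hw⟩ := this
    exact ⟨v, w, hw.ne⟩
  -- T degree ≥ 1
  have hdge : ∀ v, 1 ≤ d v := by
    intro v
    obtain ⟨u, hu⟩ := exists_ne v
    obtain ⟨p⟩ := hT.isConnected.preconnected v u
    show 0 < T.degree v
    rw [degree_pos_iff_exists_adj]
    cases p with
    | nil => exact absurd rfl hu
    | cons h p => exact ⟨_, h⟩
  -- sum of degrees
  have hsum : ∑ v, d v = 2 * (Fintype.card V - 1) := by
    have hc : ∀ (inst : Fintype T.edgeSet), (@SimpleGraph.edgeFinset _ T inst).card = T.edgeSet.ncard := by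
      intro inst
      rw [Set.ncard_eq_toFinset_card']
      congr 1
    have h1 := T.sum_degrees_eq_twice_card_edges
    have h2 := hT.card_edgeFinset
    rw [hc _] at h1 h2
    show ∑ v, T.degree v = 2 * (Fintype.card V - 1)
    omega
  have hn1 : 1 ≤ Fintype.card V := Fintype.card_pos
  set a1 := (univ.filter (fun v => d v = 1)).card with ha1
  set a2 := (univ.filter (fun v => d v = 2)).card with ha2
  set a3 := (univ.filter (fun v => d v = 3)).card with ha3
  have key : ∀ (c : ℕ) (p : V → Prop) [DecidablePred p],
      ∑ v, (if p v then c else 0) = c * (univ.filter p).card := by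
    intro c p _
    rw [Finset.sum_ite, Finset.sum_const, Finset.sum_const_zero, add_zero, smul_eq_mul, mul_comm]
  have hsum2 : ∑ v, d v = Fintype.card V + 2 * a3 + a2 := by
    have : ∀ v, d v = 1 + (if d v = 3 then 2 else 0) + (if d v = 2 then 1 else 0) := by
      intro v
      have := hdle v; have := hdge v
      split_ifs <;> omega
    rw [Finset.sum_congr rfl (fun v _ => this v)]
    rw [Finset.sum_add_distrib, Finset.sum_add_distrib, Finset.sum_const, key 2, key 1,
      smul_eq_mul, mul_one, ha3, ha2, Finset.card_univ]
    ring
  have hpart : a1 + a2 + a3 = Fintype.card V := by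
    have : ∀ v : V, (1 : ℕ) = (if d v = 1 then 1 else 0) + (if d v = 2 then 1 else 0)
        + (if d v = 3 then 1 else 0) := by
      intro v
      have := hdle v; have := hdge v
      split_ifs <;> omega
    have h2 : ∑ v : V, (1 : ℕ) = a1 + a2 + a3 := by
      rw [Finset.sum_congr rfl (fun v _ => this v), Finset.sum_add_distrib,
        Finset.sum_add_distrib, key 1, key 1, key 1, ha1, ha2, ha3]
      ring
    rw [Finset.sum_const, smul_eq_mul, mul_one, Finset.card_univ] at h2
    omega
  -- translate set ncards to filter cards
  have hleaf : {v : V | (T.neighborSet v).ncard = 1}.ncard = a1 := by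
    rw [Set.ncard_eq_toFinset_card', Set.toFinset_setOf, ha1]
    congr 1
    apply Finset.filter_congr
    intro v _
    rw [deg_eq_degree]
  have hfull : {v : V | (T.neighborSet v).ncard = (G.neighborSet v).ncard}.ncard = a3 := by
    rw [Set.ncard_eq_toFinset_card', Set.toFinset_setOf, ha3]
    congr 1
    apply Finset.filter_congr
    intro v _
    rw [deg_eq_degree, hreg]
  rw [hleaf, hfull]
  omega

theorem stmt8 {V : Type*} [Fintype V] (G : SimpleGraph V)
    (hG : G.Connected) (hreg : ∀ v : V, deg G v = 3) :
    lam G = phi G + 2 := by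
  classical
  obtain ⟨T0, hT0le, hT0⟩ := exists_spanning_tree' G hG
  have hkey : ∀ T : SimpleGraph V, IsSpanningTree G T → leafCount T = fullDegCount G T + 2 := by
    intro T hT
    exact leaf_eq_full_add_two G T (fun v => hreg v) hT.1 hT.2
  set Sphi := {k | ∃ T : SimpleGraph V, IsSpanningTree G T ∧ fullDegCount G T = k} with hSphi
  set Sleaf := {k | ∃ T : SimpleGraph V, IsSpanningTree G T ∧ leafCount T = k} with hSleaf
  have hneP : Sphi.Nonempty := ⟨_, T0, ⟨hT0le, hT0⟩, rfl⟩
  have hneL : Sleaf.Nonempty := ⟨_, T0, ⟨hT0le, hT0⟩, rfl⟩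
  have hbddP : BddAbove Sphi := by
    refine ⟨Fintype.card V, ?_⟩
    rintro k ⟨T, hT, rfl⟩
    calc fullDegCount G T ≤ (Set.univ : Set V).ncard :=
          Set.ncard_le_ncard (Set.subset_univ _) Set.finite_univ
      _ = Fintype.card V := by rw [Set.ncard_univ, Nat.card_eq_fintype_card]
  have hmem := Nat.sSup_mem hneP hbddP
  obtain ⟨T1, hT1, hT1eq⟩ := hmem
  have hphi : phi G = fullDegCount G T1 := hT1eq.symm
  apply le_antisymm
  · apply csSup_le hneL
    rintro k ⟨T, hT, rfl⟩
    rw [hkey T hT]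
    have : fullDegCount G T ≤ phi G := le_csSup hbddP ⟨T, hT, rfl⟩
    omega
  · apply le_csSup
    · refine ⟨Fintype.card V, ?_⟩
      rintro k ⟨T, hT, rfl⟩
      calc leafCount T ≤ (Set.univ : Set V).ncard :=
            Set.ncard_le_ncard (Set.subset_univ _) Set.finite_univ
        _ = Fintype.card V := by rw [Set.ncard_univ, Nat.card_eq_fintype_card]
    · exact ⟨T1, hT1, by rw [hkey T1 hT1, hphi]⟩
end

section
/- For any connected r-regular graph G on n vertices (r ≥ 2), φ(G) ≤ n/(r-1), where φ(G) is the maximum number of full degree vertices in a spanning tree. -/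
open SimpleGraph

lemma key_stmt12 {V : Type*} [Fintype V] (G T : SimpleGraph V) (r : ℕ)
    (hST : IsSpanningTree G T) (hc : 2 ≤ Fintype.card V) (hr : 2 ≤ r)
    (hreg : ∀ v : V, deg G v = r) :
    (r - 1) * fullDegCount G T ≤ Fintype.card V := by
  classical
  obtain ⟨hle, hT⟩ := hST
  have hdeg1 : ∀ v : V, 1 ≤ T.degree v := by
    intro v
    rw [show (1 ≤ T.degree v) = (0 < T.degree v) from rfl, degree_pos_iff_exists_adj]
    obtain ⟨w, hw⟩ := Fintype.exists_ne_of_one_lt_card (by omega) v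
    obtain ⟨p⟩ := hT.isConnected.preconnected v w
    cases p with
    | nil => exact absurd rfl hw.symm
    | cons h _ => exact ⟨_, h⟩
  have hdegeq : ∀ v : V, deg T v = T.degree v := by
    intro v; rw [deg, Set.ncard_eq_toFinset_card']; rfl
  set s : Finset V := Finset.univ.filter (fun v => deg T v = deg G v) with hs
  have hcount : fullDegCount G T = s.card := by
    rw [fullDegCount, Set.ncard_eq_toFinset_card']
    congr 1
    ext v; simp [hs]
  have hsum : ∑ v : V, T.degree v = 2 * (Fintype.card V - 1) := by
    rw [sum_degrees_eq_twice_card_edges, ← hT.card_edgeFinset]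
    omega
  have hcards : s.card + (Finset.univ.filter (fun v => ¬ deg T v = deg G v)).card
      = Fintype.card V := by
    rw [hs, Finset.card_filter_add_card_filter_not]; rfl
  have hsplit : r * s.card + (Fintype.card V - s.card) ≤ ∑ v : V, T.degree v := by
    rw [← Finset.sum_filter_add_sum_filter_not Finset.univ (fun v => deg T v = deg G v)]
    gcongr
    · calc r * s.card = ∑ _v ∈ s, r := by simp [Finset.sum_const, mul_comm]
        _ ≤ ∑ v ∈ s, T.degree v := by
            apply Finset.sum_le_sum
            intro v hv
            rw [hs, Finset.mem_filter] at hv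
            rw [← hdegeq, hv.2, hreg]
    · calc Fintype.card V - s.card
          = ∑ _v ∈ Finset.univ.filter (fun v => ¬ deg T v = deg G v), 1 := by
            simp; omega
        _ ≤ _ := Finset.sum_le_sum (fun v _ => hdeg1 v)
  have hk : s.card ≤ Fintype.card V := by omega
  rw [hcount, Nat.sub_mul, one_mul]
  set m := r * s.card
  omega

theorem stmt12 {V : Type*} [Fintype V] (G : SimpleGraph V) (n r : ℕ)
    (hn : n = Fintype.card V) (hn2 : 2 ≤ n) (hr : 2 ≤ r)
    (hG : G.Connected) (hreg : ∀ v : V, deg G v = r) :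
    (phi G : ℝ) ≤ (n : ℝ) / (r - 1) := by
  have hr1 : (0:ℝ) < (r:ℝ) - 1 := by
    have : (2:ℝ) ≤ r := by exact_mod_cast hr
    linarith
  have hmain : (r - 1) * phi G ≤ n := by
    set S := {k | ∃ T : SimpleGraph V, IsSpanningTree G T ∧ fullDegCount G T = k} with hS
    rcases Set.eq_empty_or_nonempty S with hE | hne
    · rw [phi, ← hS, hE]
      rw [show sSup (∅:Set ℕ) = 0 from csSup_empty]; simp
    · have hbdd : BddAbove S := by
        refine ⟨n, fun k hk => ?_⟩
        obtain ⟨T, hT, rfl⟩ := hk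
        have := key_stmt12 G T r hT (hn ▸ hn2) hr hreg
        calc fullDegCount G T ≤ (r-1) * fullDegCount G T := Nat.le_mul_of_pos_left _ (by omega)
          _ ≤ Fintype.card V := this
          _ = n := hn.symm
      have hmem : sSup S ∈ S := Nat.sSup_mem hne hbdd
      obtain ⟨T, hT, hTk⟩ := hmem
      rw [phi, ← hS, ← hTk]
      exact hn ▸ key_stmt12 G T r hT (hn ▸ hn2) hr hreg
  rw [le_div_iff₀ hr1]
  calc (phi G : ℝ) * ((r:ℝ) - 1) = ((r - 1 : ℕ) : ℝ) * phi G := by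
        push_cast [Nat.cast_sub (by omega : 1 ≤ r)]
        ring
    _ ≤ n := by exact_mod_cast hmain
end

section
/- If v₁,...,v_k are vertices of a connected graph G with pairwise disjoint closed neighborhoods, then G has a spanning tree in which each v_i has full degree. -/
open SimpleGraph

/-- Adding an edge between two components of an acyclic graph keeps it acyclic. -/
lemma sup_edge_isAcyclic {V : Type*} {T : SimpleGraph V} {x y : V}
    (hT : T.IsAcyclic) (hxy : x ≠ y) (hr : ¬T.Reachable x y) :
    (T ⊔ edge x y).IsAcyclic := by
  intro u c hc
  by_cases he : s(x, y) ∈ c.edges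
  · have hreach := (adj_and_reachable_delete_edges_iff_exists_cycle.mpr ⟨u, c, hc, he⟩).2
    have hle : ((T ⊔ edge x y) \ fromEdgeSet {s(x, y)}) ≤ T := by
      intro a b hab
      rw [sdiff_adj] at hab
      rcases hab with ⟨hab, hnab⟩
      cases hab with
      | inl h => exact h
      | inr h => exact absurd h hnab
    exact hr (hreach.mono hle)
  · have hq : ∀ e ∈ c.edges, e ∈ T.edgeSet := by
      intro e hec
      have := c.edges_subset_edgeSet hec
      rw [edgeSet_sup, edge_edgeSet_of_ne hxy] at this
      rcases this with h | h
      · exact h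
      · exact absurd (Set.mem_singleton_iff.mp h ▸ hec) he
    exact hT (c.transfer T hq) (hc.transfer hq)

theorem stmt15 {V : Type*} [Fintype V] (G : SimpleGraph V) (k : ℕ) (v : Fin k → V)
    (hG : G.Connected)
    (hdisj : ∀ i j : Fin k, i ≠ j → Disjoint (closedNbhd G (v i)) (closedNbhd G (v j))) :
    ∃ T : SimpleGraph V, IsSpanningTree G T ∧ ∀ i : Fin k, deg T (v i) = deg G (v i) := by
  classical
  -- uniqueness of the center whose closed neighborhood contains a given vertex
  have huniq : ∀ (i j : Fin k) (u : V),
      u ∈ closedNbhd G (v i) → u ∈ closedNbhd G (v j) → i = j := by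
    intro i j u hi hj
    by_contra hne
    exact Set.disjoint_left.mp (hdisj i j hne) hi hj
  -- the star forest H
  set H : SimpleGraph V :=
    { Adj := fun a b => G.Adj a b ∧ ((∃ i, a = v i) ∨ (∃ i, b = v i))
      symm := by constructor; rintro a b ⟨h1, h2⟩; exact ⟨h1.symm, h2.symm⟩
      loopless := ⟨fun a h => G.loopless.irrefl a h.1⟩ } with hH
  have hHG : H ≤ G := fun a b h => h.1
  -- centers are not H-adjacent to each other
  have hctr : ∀ (a b : V), H.Adj a b → (∃ i, a = v i) → ¬(∃ i, b = v i) := by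
    rintro a b ⟨hab, -⟩ ⟨i, rfl⟩ ⟨j, rfl⟩
    have hij : i = j :=
      huniq i j (v j) (Set.mem_insert_of_mem _ hab) (Set.mem_insert _ _)
    exact G.loopless.irrefl (v i) (hij ▸ hab)
  -- a non-center has at most one H-neighbor
  have hdeg1 : ∀ (u a b : V), ¬(∃ i, u = v i) → H.Adj u a → H.Adj u b → a = b := by
    rintro u a b hu ⟨ha, hca⟩ ⟨hb, hcb⟩
    rcases hca with h | ⟨i, rfl⟩
    · exact absurd h hu
    rcases hcb with h | ⟨j, rfl⟩
    · exact absurd h hu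
    have : i = j := huniq i j u (Set.mem_insert_of_mem _ ha.symm)
      (Set.mem_insert_of_mem _ hb.symm)
    rw [this]
  -- H is acyclic
  have hHac : H.IsAcyclic := by
    intro u c hc
    -- find a non-center on the cycle
    have hnn : ¬c.Nil := hc.not_nil
    rw [SimpleGraph.Walk.not_nil_iff] at hnn
    obtain ⟨b, hadj, q, rfl⟩ := hnn
    have hw : ∃ w ∈ (SimpleGraph.Walk.cons hadj q).support, ¬(∃ i, w = v i) := by
      by_cases hu : ∃ i, u = v i
      · exact ⟨b, by simp, hctr u b hadj hu⟩
      · exact ⟨u, by simp, hu⟩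
    obtain ⟨w, hws, hwc⟩ := hw
    -- rotate the cycle to start at w
    set c' := (SimpleGraph.Walk.cons hadj q).rotate w hws with hc'
    have hcyc : c'.IsCycle := hc.rotate hws
    have hnn' : ¬c'.Nil := hcyc.not_nil
    rw [SimpleGraph.Walk.not_nil_iff] at hnn'
    obtain ⟨b', hadj', q', hq'⟩ := hnn'
    -- the last vertex before returning to w
    have hbw : b' ≠ w := fun h => H.loopless.irrefl w (h ▸ hadj')
    have hnnq : ¬q'.Nil := SimpleGraph.Walk.not_nil_of_ne hbw
    have hnnr : ¬q'.reverse.Nil := by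
      rw [SimpleGraph.Walk.not_nil_iff_lt_length] at hnnq ⊢
      simpa using hnnq
    rw [SimpleGraph.Walk.not_nil_iff] at hnnr
    obtain ⟨a, hadja, r, hr⟩ := hnnr
    -- a and b' are both H-neighbors of the non-center w, hence equal
    have hab : a = b' := hdeg1 w a b' hwc hadja hadj'
    -- so the first edge of the cycle also occurs in its tail: contradiction
    have hmem : s(w, a) ∈ q'.edges := by
      have : s(w, a) ∈ q'.reverse.edges := by
        rw [hr]; simp
      rwa [SimpleGraph.Walk.edges_reverse, List.mem_reverse] at this
    have hnodup := hcyc.edges_nodup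
    rw [hq'] at hnodup
    simp only [SimpleGraph.Walk.edges_cons, List.nodup_cons] at hnodup
    exact hnodup.1 (hab ▸ hmem)
  -- take a maximal acyclic graph between H and G
  have hfin : {T : SimpleGraph V | H ≤ T ∧ T ≤ G ∧ T.IsAcyclic}.Finite := Set.toFinite _
  obtain ⟨T, hTmem, hTmax⟩ : ∃ T ∈ {T : SimpleGraph V | H ≤ T ∧ T ≤ G ∧ T.IsAcyclic},
      ∀ T' ∈ {T : SimpleGraph V | H ≤ T ∧ T ≤ G ∧ T.IsAcyclic}, id T ≤ id T' → id T = id T' := by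
    obtain ⟨T, hT, hm⟩ := Set.Finite.exists_maximalFor id _ hfin ⟨H, le_refl H, hHG, hHac⟩
    exact ⟨T, hT, fun T' hT' h => le_antisymm h (hm (j := T') hT' h)⟩
  obtain ⟨hHT, hTG, hTac⟩ := hTmem
  -- every G-edge has its endpoints T-reachable
  have hkey : ∀ x y : V, G.Adj x y → T.Reachable x y := by
    intro x y hxy
    by_contra hr
    have hne : x ≠ y := hxy.ne
    have hT' : (T ⊔ edge x y) ∈ {T : SimpleGraph V | H ≤ T ∧ T ≤ G ∧ T.IsAcyclic} := by
      refine ⟨le_trans hHT le_sup_left, sup_le hTG ?_, sup_edge_isAcyclic hTac hne hr⟩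
      intro a b hab
      rw [edge_adj] at hab
      rcases hab.1 with ⟨rfl, rfl⟩ | ⟨rfl, rfl⟩
      · exact hxy
      · exact hxy.symm
    have heq : T = T ⊔ edge x y := hTmax _ hT' le_sup_left
    apply hr
    have hTadj : T.Adj x y := by
      rw [heq]
      exact Or.inr (by rw [edge_adj]; tauto)
    exact hTadj.reachable
  -- T is connected
  have hTconn : T.Connected := by
    have hpre : T.Preconnected := by
      intro x y
      obtain ⟨p⟩ := hG.preconnected x y
      induction p with
      | nil => exact SimpleGraph.Reachable.refl _
      | cons h _ ih => exact (hkey _ _ h).trans ih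
    haveI : Nonempty V := hG.nonempty
    exact ⟨hpre⟩
  refine ⟨T, ⟨hTG, hTconn, hTac⟩, ?_⟩
  intro i
  have hns : T.neighborSet (v i) = G.neighborSet (v i) := by
    apply Set.Subset.antisymm
    · exact fun u hu => hTG hu
    · intro u hu
      exact hHT ⟨hu, Or.inl ⟨i, rfl⟩⟩
  rw [deg, deg, hns]
end
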